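/- Let μ > −1, ν > 0, k > 0 and n ≥ 1. Then, as a → 0⁺ and b → 0⁺ with b/√a → k (subject to b > a > 0), the functions x ↦ Q_n^{μ,ν,a,b}(x/a) converge to the function x ↦ (−1)^n [(μ+ν+1)_n / Γ(μ+1)] · ₁F₂(−n; μ+ν+1, μ+1; k²x) · x^μ, uniformly for x in any compact subset of (0, ∞). -/

import Mathlib

open MeasureTheory Real Filter Set Finset

/-- Modified Bessel function of the first kind. -/
noncomputable def besselI (μ z : ℝ) : ℝ :=
  (z / 2) ^ μ * ∑' k : ℕ, (z ^ 2 / 4) ^ k / (Nat.factorial k * Real.Gamma (μ + k + 1))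

/-- Modified Bessel function of the second kind. -/
noncomputable def besselK (ν z : ℝ) : ℝ :=
  ∫ t in Set.Ioi (0 : ℝ), Real.exp (-z * Real.cosh t) * Real.cosh (ν * t)

/-- Scaled modified Bessel function of the first kind. -/
noncomputable def omegaW (μ a x : ℝ) : ℝ := x ^ (μ / 2) * besselI μ (2 * a * Real.sqrt x)

/-- Scaled modified Bessel function of the second kind. -/
noncomputable def rhoW (ν b x : ℝ) : ℝ := x ^ (ν / 2) * besselK ν (2 * b * Real.sqrt x)

/-- Pochhammer symbol (rising factorial) for a real argument. -/
noncomputable def poch (t : ℝ) (k : ℕ) : ℝ := ∏ i ∈ Finset.range k, (t + i)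

/-- Pochhammer symbol (rising factorial) for a complex argument. -/
noncomputable def cpoch (t : ℂ) (k : ℕ) : ℂ := ∏ i ∈ Finset.range k, (t + i)

/-- The polynomial `r_{m,μ}` built from Lommel polynomials. -/
noncomputable def rPoly (μ : ℝ) (m : ℕ) (x : ℝ) : ℝ :=
  if m = 0 then 1
  else (-1 : ℝ) ^ m * ∑ j ∈ Finset.range (m / 2),
    ((m - j - 2).choose j : ℝ) * poch (μ + j + 2) (m - 2 * j - 2) * x ^ (j + 1)

/-- The polynomial `s_{m,μ}` built from Lommel polynomials. -/
noncomputable def sPoly (μ : ℝ) (m : ℕ) (x : ℝ) : ℝ :=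
  if m = 0 then 0
  else (-1 : ℝ) ^ (m + 1) * ∑ j ∈ Finset.range ((m + 1) / 2),
    ((m - j - 1).choose j : ℝ) * poch (μ + j + 1) (m - 2 * j - 1) * x ^ j

/-- The linear form `Q_n^{μ,ν,a,b}`. -/
noncomputable def Qmop (μ ν a b : ℝ) (n : ℕ) (x : ℝ) : ℝ :=
  (-1 : ℝ) ^ n * ∑ j ∈ Finset.range (n + 1),
    (n.choose j : ℝ) * (Real.Gamma (μ + ν + 1 + n) / Real.Gamma (μ + ν + 1 + j)) *
      ((a ^ 2 - b ^ 2) / a) ^ j * omegaW (μ + j) a x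

/-- The dual linear form `P_n^{μ,ν,a,b}`. -/
noncomputable def Pmop (μ ν a b : ℝ) (n : ℕ) (x : ℝ) : ℝ :=
  (-1 : ℝ) ^ n * (2 * (b ^ 2 - a ^ 2) ^ (μ + ν + 1) / (a ^ μ * b ^ ν * Nat.factorial n)) *
    ∑ j ∈ Finset.range (n + 1),
      (n.choose j : ℝ) * ((a ^ 2 - b ^ 2) / b) ^ j * rhoW (ν + j) b x /
        Real.Gamma (μ + ν + 1 + j)

/-- Monic generalized Laguerre polynomial. -/
noncomputable def laguerreM (α : ℝ) (n : ℕ) (x : ℝ) : ℝ :=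
  (-1 : ℝ) ^ n * ∑ j ∈ Finset.range (n + 1),
    (n.choose j : ℝ) * (Real.Gamma (α + 1 + n) / Real.Gamma (α + 1 + j)) * (-x) ^ j

/-- `Q` with integer index, vanishing for negative index. -/
noncomputable def QmopZ (μ ν a b : ℝ) (m : ℤ) (x : ℝ) : ℝ :=
  if 0 ≤ m then Qmop μ ν a b m.toNat x else 0

/-- `P` with integer index, vanishing for negative index. -/
noncomputable def PmopZ (μ ν a b : ℝ) (m : ℤ) (x : ℝ) : ℝ :=
  if 0 ≤ m then Pmop μ ν a b m.toNat x else 0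

/-- `f` has a sign change at `x₀`: it takes both positive and negative values in
every neighborhood of `x₀`. -/
def SignChangeAt (f : ℝ → ℝ) (x₀ : ℝ) : Prop :=
  ∀ ε > 0, (∃ y, |y - x₀| < ε ∧ 0 < f y) ∧ (∃ y, |y - x₀| < ε ∧ f y < 0)

/-- Recurrence coefficient `a_{2,m}`. -/
noncomputable def coefA2 (μ ν a b m : ℝ) : ℝ := (a / (b ^ 2 - a ^ 2)) ^ 2

/-- Recurrence coefficient `a_{1,m}`. -/
noncomputable def coefA1 (μ ν a b m : ℝ) : ℝ :=
  2 * (μ + ν + 2 * m + 2) * (a / (b ^ 2 - a ^ 2)) ^ 2 + (μ + m + 1) / (b ^ 2 - a ^ 2)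

/-- Recurrence coefficient `a_{0,m}`. -/
noncomputable def coefA0 (μ ν a b m : ℝ) : ℝ :=
  (6 * m ^ 2 + 6 * (μ + ν + 1) * m + (μ + ν + 1) * (μ + ν + 2)) * (a / (b ^ 2 - a ^ 2)) ^ 2 +
    (3 * m ^ 2 + (4 * μ + 2 * ν + 3) * m + (μ + 1) * (μ + ν + 1)) / (b ^ 2 - a ^ 2)

/-- Recurrence coefficient `a_{-1,m}`. -/
noncomputable def coefAm1 (μ ν a b m : ℝ) : ℝ :=
  m * (μ + ν + m) * (2 * (μ + ν + 2) * (b / (b ^ 2 - a ^ 2)) ^ 2 - (ν + m) / (b ^ 2 - a ^ 2))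

/-- Recurrence coefficient `a_{-2,m}`. -/
noncomputable def coefAm2 (μ ν a b m : ℝ) : ℝ :=
  (m - 1) * m * (μ + ν + m - 1) * (μ + ν + m) * (b / (b ^ 2 - a ^ 2)) ^ 2

noncomputable def myS (t u : ℝ) : ℝ :=
  ∑' k : ℕ, u ^ k / (Nat.factorial k * Real.Gamma (t + k + 1))

lemma poch_pos {t : ℝ} (ht : 0 < t) (j : ℕ) : 0 < poch t j := by
  apply Finset.prod_pos
  intro i _
  positivity

lemma poch_succ (t : ℝ) (j : ℕ) : poch t (j + 1) = poch t j * (t + j) := by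
  rw [poch, Finset.prod_range_succ, ← poch]

lemma Gamma_add_poch {s : ℝ} (hs : 0 < s) (j : ℕ) :
    Real.Gamma (s + j) = Real.Gamma s * poch s j := by
  induction j with
  | zero => simp [poch]
  | succ j ih =>
    have h1 : s + (j + 1 : ℕ) = (s + j) + 1 := by push_cast; ring
    have h2 : s + (j : ℝ) ≠ 0 := by positivity
    rw [h1, Real.Gamma_add_one h2, ih, poch_succ]
    ring

lemma poch_neg_nat {n j : ℕ} (hj : j ≤ n) :
    poch (-(n : ℝ)) j = (-1 : ℝ) ^ j * (n.choose j : ℝ) * (Nat.factorial j : ℝ) := by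
  induction j with
  | zero => simp [poch]
  | succ j ih =>
    have hj' : j ≤ n := Nat.le_of_succ_le hj
    have hjn : j < n := hj
    rw [poch_succ, ih hj']
    have hch : ((n.choose (j+1) : ℝ)) * ((j : ℝ) + 1) = (n.choose j : ℝ) * ((n : ℝ) - j) := by
      have h2 : (n.choose (j+1)) * (j+1) = n.choose j * (n - j) := Nat.choose_succ_right_eq n j
      have h3 : ((n - j : ℕ) : ℝ) = (n : ℝ) - j := Nat.cast_sub hj'
      calc ((n.choose (j+1) : ℝ)) * ((j : ℝ) + 1)
          = (((n.choose (j+1)) * (j+1) : ℕ) : ℝ) := by push_cast; ring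
        _ = ((n.choose j * (n - j) : ℕ) : ℝ) := by rw [h2]
        _ = (n.choose j : ℝ) * ((n : ℝ) - j) := by push_cast [h3]; ring
    have hfac : ((Nat.factorial (j+1) : ℝ)) = (Nat.factorial j : ℝ) * ((j : ℝ) + 1) := by
      push_cast [Nat.factorial_succ]; ring
    rw [pow_succ, hfac]
    linear_combination ((-1:ℝ)^j * (Nat.factorial j : ℝ)) * hch

lemma myS_zero (t : ℝ) : myS t 0 = 1 / Real.Gamma (t + 1) := by
  unfold myS
  rw [tsum_eq_single 0]
  · simp
  · intro k hk
    simp [zero_pow hk]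

lemma contS {μ : ℝ} (hμ : -1 < μ) (j : ℕ) {M : ℝ} (hM : 0 ≤ M) :
    ContinuousOn (fun u => myS (μ + j) u) (Set.Icc (-M) M) := by
  have hμ1 : (0:ℝ) < μ + 1 := by linarith
  have hj0 : (0:ℝ) ≤ (j:ℝ) := Nat.cast_nonneg j
  unfold myS
  apply continuousOn_tsum
    (u := fun k => (M / (μ + 1)) ^ k / (Nat.factorial k) * (1 / Real.Gamma (μ + j + 1)))
  · intro k
    exact ((continuous_pow k).div_const _).continuousOn
  · exact (Real.summable_pow_div_factorial (M / (μ + 1))).mul_right _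
  · intro k u hu
    have hk0 : (0:ℝ) ≤ (k:ℝ) := Nat.cast_nonneg k
    have hΓ1 : (0:ℝ) < Real.Gamma (μ + j + 1) := by
      apply Real.Gamma_pos_of_pos; linarith
    have hΓbig : (0:ℝ) < Real.Gamma (μ + (j:ℝ) + (k:ℝ) + 1) := by
      apply Real.Gamma_pos_of_pos; linarith
    have hkey : Real.Gamma (μ + j + 1) * (μ + 1) ^ k ≤ Real.Gamma (μ + (j:ℝ) + (k:ℝ) + 1) := by
      have h1 : μ + (j:ℝ) + (k:ℝ) + 1 = (μ + j + 1) + k := by ring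
      rw [h1, Gamma_add_poch (by linarith) k]
      have h2 : (μ + 1) ^ k ≤ poch (μ + (j:ℝ) + 1) k := by
        calc (μ + 1) ^ k = ∏ _i ∈ Finset.range k, (μ + 1) := by
              rw [Finset.prod_const, Finset.card_range]
          _ ≤ ∏ i ∈ Finset.range k, (μ + (j:ℝ) + 1 + i) := by
              apply Finset.prod_le_prod
              · intro i _; linarith
              · intro i _
                have : (0:ℝ) ≤ (i:ℝ) := Nat.cast_nonneg i
                linarith
          _ = poch (μ + (j:ℝ) + 1) k := rfl
      nlinarith
    have habs : |u| ≤ M := abs_le.mpr ⟨hu.1, hu.2⟩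
    have hfk : (0:ℝ) < (Nat.factorial k : ℝ) := by positivity
    calc ‖u ^ k / (Nat.factorial k * Real.Gamma ((μ + j) + k + 1))‖
        = |u| ^ k / (Nat.factorial k * Real.Gamma (μ + (j:ℝ) + (k:ℝ) + 1)) := by
          have hD : (0:ℝ) < (Nat.factorial k : ℝ) * Real.Gamma (μ + (j:ℝ) + (k:ℝ) + 1) := by
            positivity
          rw [Real.norm_eq_abs, abs_div, abs_pow, abs_of_pos hD]
      _ ≤ M ^ k / (Nat.factorial k * (Real.Gamma (μ + j + 1) * (μ + 1) ^ k)) := by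
          refine div_le_div₀ (pow_nonneg hM k) ?_ (by positivity) ?_
          · exact pow_le_pow_left₀ (abs_nonneg u) habs k
          · have := mul_le_mul_of_nonneg_left hkey hfk.le
            linarith
      _ = (M / (μ + 1)) ^ k / (Nat.factorial k) * (1 / Real.Gamma (μ + j + 1)) := by
          rw [div_pow, div_div, div_mul_div_comm, mul_one]
          congr 1
          ring

lemma omega_eq {a x : ℝ} (t : ℝ) (ha : 0 < a) (hx : 0 < x) :
    omegaW t a (x / a) = x ^ t * myS t (a * x) := by
  have hxa : (0:ℝ) < x / a := div_pos hx ha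
  have hax : (0:ℝ) < a * x := mul_pos ha hx
  have h1 : 2 * a * Real.sqrt (x / a) / 2 = Real.sqrt (a * x) := by
    calc 2 * a * Real.sqrt (x / a) / 2 = a / Real.sqrt a * Real.sqrt x := by
          rw [Real.sqrt_div hx.le]; ring
      _ = Real.sqrt a * Real.sqrt x := by rw [Real.div_sqrt]
      _ = Real.sqrt (a * x) := (Real.sqrt_mul ha.le x).symm
  have h2 : (2 * a * Real.sqrt (x / a)) ^ 2 / 4 = a * x := by
    have hs : (Real.sqrt (x / a)) ^ 2 = x / a := Real.sq_sqrt hxa.le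
    rw [mul_pow, hs]
    field_simp
    norm_num
  unfold omegaW besselI
  rw [h1, h2, ← mul_assoc]
  unfold myS
  congr 1
  rw [Real.sqrt_eq_rpow, ← Real.rpow_mul hax.le]
  have he : 1 / 2 * t = t / 2 := by ring
  rw [he, ← Real.mul_rpow hxa.le hax.le]
  have h3 : x / a * (a * x) = x ^ (2:ℕ) := by field_simp
  rw [h3, ← Real.rpow_natCast x 2, ← Real.rpow_mul hx.le]
  congr 1
  push_cast
  ring

lemma term_eq {μ ν k x : ℝ} (hμ : -1 < μ) (hν : 0 < ν) (hx : 0 < x) {n j : ℕ} (hj : j ≤ n) :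
    (n.choose j : ℝ) * (Real.Gamma (μ + ν + 1 + n) / Real.Gamma (μ + ν + 1 + j)) *
      (-k ^ 2) ^ j * x ^ (μ + (j:ℝ)) * (1 / Real.Gamma (μ + (j:ℝ) + 1)) =
    (poch (μ + ν + 1) n / Real.Gamma (μ + 1)) *
      (poch (-(n:ℝ)) j / (poch (μ + ν + 1) j * poch (μ + 1) j * (Nat.factorial j : ℝ)) *
        (k ^ 2 * x) ^ j) * x ^ μ := by
  have hs : (0:ℝ) < μ + ν + 1 := by linarith
  have hGs : 0 < Real.Gamma (μ + ν + 1) := Real.Gamma_pos_of_pos hs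
  have hG1 : 0 < Real.Gamma (μ + 1) := Real.Gamma_pos_of_pos (by linarith)
  have hp1 : 0 < poch (μ + ν + 1) j := poch_pos hs j
  have hp2 : 0 < poch (μ + 1) j := poch_pos (by linarith) j
  have hfj : (0:ℝ) < (Nat.factorial j : ℝ) := by positivity
  have e1 : Real.Gamma (μ + ν + 1 + n) = Real.Gamma (μ+ν+1) * poch (μ+ν+1) n :=
    Gamma_add_poch hs n
  have e2 : Real.Gamma (μ + ν + 1 + j) = Real.Gamma (μ+ν+1) * poch (μ+ν+1) j :=
    Gamma_add_poch hs j
  have e3 : Real.Gamma (μ + (j:ℝ) + 1) = Real.Gamma (μ+1) * poch (μ+1) j := by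
    have h : μ + (j:ℝ) + 1 = (μ + 1) + j := by ring
    rw [h, Gamma_add_poch (by linarith) j]
  have e4 : poch (-(n:ℝ)) j = (-1)^j * (n.choose j : ℝ) * (Nat.factorial j : ℝ) :=
    poch_neg_nat hj
  have e5 : x ^ (μ + (j:ℝ)) = x ^ μ * x ^ j := by
    rw [Real.rpow_add hx, Real.rpow_natCast]
  have e6 : (-k^2:ℝ)^j = (-1)^j * (k^2)^j := by rw [neg_pow]
  have e7 : (k^2*x:ℝ)^j = (k^2)^j * x^j := mul_pow _ _ _
  rw [e1, e2, e3, e4, e5, e6, e7]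
  field_simp

set_option maxHeartbeats 1000000 in
/-- limiting form of `Q_n(x/a)` as `a → 0⁺`, `b → 0⁺` with `b/√a → k`,
uniformly on compact subsets of `(0,∞)`. -/
theorem Qmop_limit_small_a (μ ν k : ℝ) (hμ : -1 < μ) (hν : 0 < ν) (hk : 0 < k)
    (n : ℕ) (hn : 1 ≤ n) :
    ∀ K : Set ℝ, IsCompact K → K ⊆ Set.Ioi 0 → ∀ ε > (0 : ℝ), ∃ δ > (0 : ℝ),
      ∀ a b : ℝ, 0 < a → a < b → a < δ → |b / Real.sqrt a - k| < δ →
        ∀ x ∈ K,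
          |Qmop μ ν a b n (x / a) -
            (-1 : ℝ) ^ n * (poch (μ + ν + 1) n / Real.Gamma (μ + 1)) *
              (∑ j ∈ Finset.range (n + 1),
                poch (-(n : ℝ)) j /
                  (poch (μ + ν + 1) j * poch (μ + 1) j * (Nat.factorial j : ℝ)) *
                  (k ^ 2 * x) ^ j) * x ^ μ| < ε := by
  intro K hK hKpos ε hε
  rcases K.eq_empty_or_nonempty with rfl | hKne
  · exact ⟨1, one_pos, fun a b _ _ _ _ x hx => absurd hx (notMem_empty x)⟩
  have hμ1 : (0:ℝ) < μ + 1 := by linarith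
  obtain ⟨x0, hx0K, hx0max⟩ := hK.exists_isMaxOn hKne continuousOn_id
  set M : ℝ := max x0 1 with hMdef
  have hM1 : (1:ℝ) ≤ M := le_max_right _ _
  have hM0 : (0:ℝ) ≤ M := by linarith
  have hxleM : ∀ y ∈ K, y ≤ M := fun y hy => le_trans (hx0max hy) (le_max_left _ _)
  set G : ℝ × ℝ × ℝ → ℝ := fun p =>
    (-1:ℝ)^n * ∑ j ∈ Finset.range (n+1),
      (n.choose j : ℝ) * (Real.Gamma (μ + ν + 1 + n) / Real.Gamma (μ + ν + 1 + j)) *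
        p.1 ^ j * p.2.2 ^ (μ + (j:ℝ)) * myS (μ + j) (p.2.1 * p.2.2) with hGdef
  set D : Set (ℝ × ℝ × ℝ) := Set.Icc (-k^2-1) (-k^2+1) ×ˢ (Set.Icc (0:ℝ) 1 ×ˢ K)
    with hDdef
  have hDcomp : IsCompact D := (isCompact_Icc).prod ((isCompact_Icc).prod hK)
  have hGcont : ContinuousOn G D := by
    apply ContinuousOn.mul continuousOn_const
    apply continuousOn_finset_sum
    intro j _
    have h1 : ContinuousOn (fun p : ℝ×ℝ×ℝ => p.1 ^ j) D := (continuous_fst.pow j).continuousOn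
    have h2 : ContinuousOn (fun p : ℝ×ℝ×ℝ => p.2.2 ^ (μ + (j:ℝ))) D := by
      apply ContinuousOn.rpow_const (continuous_snd.snd.continuousOn)
      intro p hp
      exact Or.inl (ne_of_gt (hKpos hp.2.2))
    have h3 : ContinuousOn (fun p : ℝ×ℝ×ℝ => myS (μ + j) (p.2.1 * p.2.2)) D := by
      apply (contS hμ j hM0).comp ((continuous_snd.fst.mul continuous_snd.snd).continuousOn)
      intro p hp
      obtain ⟨_, ht, hxK⟩ := hp
      have hxpos : 0 < p.2.2 := hKpos hxK
      have hxM : p.2.2 ≤ M := hxleM _ hxK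
      show p.2.1 * p.2.2 ∈ Set.Icc (-M) M
      constructor
      · have : 0 ≤ p.2.1 * p.2.2 := mul_nonneg ht.1 hxpos.le
        linarith
      · calc p.2.1 * p.2.2 ≤ 1 * p.2.2 := by
              apply mul_le_mul_of_nonneg_right ht.2 hxpos.le
          _ ≤ M := by linarith
    exact ((continuousOn_const.mul h1).mul h2).mul h3
  have hUC := hDcomp.uniformContinuousOn_of_continuous hGcont
  rw [Metric.uniformContinuousOn_iff] at hUC
  obtain ⟨δ₀, hδ₀, hUC⟩ := hUC ε hε
  set δ : ℝ := min δ₀ 1 / (2*k+3) with hδdef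
  have hδpos : 0 < δ := by
    apply div_pos (lt_min hδ₀ one_pos)
    linarith
  refine ⟨δ, hδpos, ?_⟩
  intro a b ha hab haδ hbδ x hxK
  have hx : 0 < x := hKpos hxK
  have hb : 0 < b := lt_trans ha hab
  have hsa : 0 < Real.sqrt a := Real.sqrt_pos.mpr ha
  have hmin : 0 < min δ₀ 1 := lt_min hδ₀ one_pos
  have hδmul : δ * (2*k+3) = min δ₀ 1 := by
    rw [hδdef]; field_simp
  have hδ1 : δ ≤ 1 := by nlinarith [min_le_right δ₀ 1]
  have hδδ₀ : min δ₀ 1 ≤ δ₀ := min_le_left _ _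
  -- the first coordinate
  set c : ℝ := (a^2 - b^2)/a with hcdef
  have hsq : (b / Real.sqrt a)^2 = b^2 / a := by
    rw [div_pow, Real.sq_sqrt ha.le]
  have hc : c + k^2 = a - ((b/Real.sqrt a)^2 - k^2) := by
    rw [hsq, hcdef]
    field_simp
    ring
  have hr : 0 < b / Real.sqrt a := div_pos hb hsa
  have hrk : b / Real.sqrt a < k + δ := by
    have := (abs_lt.mp hbδ).2
    linarith
  have habs2 : |(b/Real.sqrt a)^2 - k^2| ≤ δ * (2*k+δ) := by
    have hfac : (b/Real.sqrt a)^2 - k^2 = (b/Real.sqrt a - k) * (b/Real.sqrt a + k) := by ring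
    rw [hfac, abs_mul]
    have h1 : |b/Real.sqrt a + k| ≤ 2*k + δ := by
      rw [abs_of_pos (by linarith)]
      linarith
    have h2 : |b/Real.sqrt a - k| ≤ δ := le_of_lt hbδ
    exact mul_le_mul h2 h1 (abs_nonneg _) hδpos.le
  have hck : |c + k^2| < min δ₀ 1 := by
    rw [hc]
    calc |a - ((b/Real.sqrt a)^2 - k^2)| ≤ |a| + |(b/Real.sqrt a)^2 - k^2| := abs_sub _ _
      _ ≤ a + δ * (2*k+δ) := by
          rw [abs_of_pos ha]; linarith
      _ < δ + δ * (2*k+1) := by nlinarith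
      _ = δ * (2*k+2) := by ring
      _ < δ * (2*k+3) := by nlinarith
      _ = min δ₀ 1 := hδmul
  have hck1 : |c + k^2| < 1 := lt_of_lt_of_le hck (min_le_right _ _)
  have hckδ₀ : |c + k^2| < δ₀ := lt_of_lt_of_le hck hδδ₀
  have haδ₀ : a < δ₀ := by
    calc a < δ := haδ
      _ ≤ min δ₀ 1 := by nlinarith [hmin, hk]
      _ ≤ δ₀ := hδδ₀
  have ha1 : a ≤ 1 := le_of_lt (lt_of_lt_of_le haδ hδ1)
  have hpD : ((c, (a, x)) : ℝ × ℝ × ℝ) ∈ D := by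
    refine ⟨?_, ⟨ha.le, ha1⟩, hxK⟩
    have := abs_lt.mp hck1
    constructor <;> simp only [] <;> linarith [this.1, this.2]
  have hqD : ((-k^2, ((0:ℝ), x)) : ℝ × ℝ × ℝ) ∈ D := by
    refine ⟨?_, ⟨le_refl 0, zero_le_one⟩, hxK⟩
    constructor <;> simp <;> linarith
  have hdist : dist ((c, (a, x)) : ℝ × ℝ × ℝ) ((-k^2, ((0:ℝ), x)) : ℝ × ℝ × ℝ) < δ₀ := by
    rw [Prod.dist_eq, Prod.dist_eq]
    apply max_lt
    · rw [Real.dist_eq]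
      have : c - -k^2 = c + k^2 := by ring
      rw [this]
      exact hckδ₀
    apply max_lt
    · rw [Real.dist_eq, sub_zero, abs_of_pos ha]
      exact haδ₀
    · rw [dist_self]
      exact hδ₀
  have hGp : G (c, (a, x)) = Qmop μ ν a b n (x/a) := by
    rw [hGdef, Qmop]
    simp only []
    congr 1
    apply Finset.sum_congr rfl
    intro j _
    rw [omega_eq (μ + (j:ℝ)) ha hx, hcdef]
    ring
  have hGq : G (-k^2, ((0:ℝ), x)) =
      (-1 : ℝ) ^ n * (poch (μ + ν + 1) n / Real.Gamma (μ + 1)) *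
        (∑ j ∈ Finset.range (n + 1),
          poch (-(n : ℝ)) j /
            (poch (μ + ν + 1) j * poch (μ + 1) j * (Nat.factorial j : ℝ)) *
            (k ^ 2 * x) ^ j) * x ^ μ := by
    rw [hGdef]
    simp only []
    have hsum : ∑ j ∈ Finset.range (n+1),
        (n.choose j : ℝ) * (Real.Gamma (μ + ν + 1 + n) / Real.Gamma (μ + ν + 1 + j)) *
          (-k^2) ^ j * x ^ (μ + (j:ℝ)) * myS (μ + j) ((0:ℝ) * x) =
        ∑ j ∈ Finset.range (n+1),
          (poch (μ + ν + 1) n / Real.Gamma (μ + 1)) *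
            (poch (-(n:ℝ)) j / (poch (μ + ν + 1) j * poch (μ + 1) j * (Nat.factorial j : ℝ)) *
              (k ^ 2 * x) ^ j) * x ^ μ := by
      apply Finset.sum_congr rfl
      intro j hj
      rw [zero_mul, myS_zero]
      exact term_eq hμ hν hx (Nat.lt_succ_iff.mp (Finset.mem_range.mp hj))
    rw [hsum, ← Finset.sum_mul, ← Finset.mul_sum]
    ring
  have hfin := hUC _ hpD _ hqD hdist
  rw [Real.dist_eq, hGp, hGq] at hfin
  exact hfin
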